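/- Let σ_1, …, σ_n be nonnegative reals and let ω_{t,i} (1 ≤ t ≤ n, 1 ≤ i ≤ k) be i.i.d. standard Gaussian N(0,1) random variables. If (i_1 < … < i_p) and (j_1 < … < j_p) are strictly increasing p-tuples in {1, …, k} whose index sets share exactly one common element (exactly one repeated index), then E[f_{i_1,…,j_p}] = (Σ_{t=1}^{n} σ_t^{2p})² + 2·Σ_{t=1}^{n} σ_t^{4p}, i.e., E[f_{i_1,…,j_p}] = ‖A‖_{2p}^{4p} + 2‖A‖_{4p}^{4p} when σ_1, …, σ_n are the singular values of a matrix A. -/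

import Mathlib

open MeasureTheory ProbabilityTheory

/-- The random variable `f_{i_1,…,j_p}` from the paper:
`f = ∏_{h=1}^{p} (Σ_t σ_t² ω_{t,i_h} ω_{t,i_{h+1}}) (Σ_s σ_s² ω_{s,j_h} ω_{s,j_{h+1}})`,
with the cyclic conventions `i_{p+1} ≡ i_1` and `j_{p+1} ≡ j_1`. -/
noncomputable def fTerm {n k p : ℕ} [NeZero p] (σ : Fin n → ℝ) {Ω : Type}
    (ω : Fin n → Fin k → Ω → ℝ) (i j : Fin p → Fin k) (x : Ω) : ℝ :=
  ∏ h : Fin p,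
    ((∑ t, σ t ^ 2 * ω t (i h) x * ω t (i (h + 1)) x) *
      (∑ s, σ s ^ 2 * ω s (j h) x * ω s (j (h + 1)) x))

section Aux

open Real Finset Nat
open scoped ENNReal NNReal

set_option linter.unusedSectionVars false
set_option linter.unusedTactic false




lemma aux_pow_le_exp (q : ℕ) {t : ℝ} (ht : 0 ≤ t) : t ^ q ≤ q ! * Real.exp t := by
  have h1 : t ^ q / q ! ≤ Real.exp t := by
    calc t ^ q / q ! ≤ ∑ i ∈ Finset.range (q + 1), t ^ i / i !  := by
          exact Finset.single_le_sum (f := fun i => t ^ i / i !)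
            (fun i _ => by positivity) (Finset.self_mem_range_succ q)
      _ ≤ Real.exp t := Real.sum_le_exp_of_nonneg ht _
  have hq : (0:ℝ) < q ! := by positivity
  calc t ^ q = q ! * (t ^ q / q !) := by field_simp
    _ ≤ q ! * Real.exp t := mul_le_mul_of_nonneg_left h1 hq.le

lemma integrable_pow_mul_gauss {b : ℝ} (hb : 0 < b) (q : ℕ) :
    Integrable (fun x : ℝ => x ^ q * Real.exp (-b * x ^ 2)) := by
  have hb2 : 0 < b / 2 := by linarith
  have hint : Integrable (fun x : ℝ => ((2 / b) ^ q * q ! + 1) * Real.exp (-(b/2) * x ^ 2)) :=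
    (integrable_exp_neg_mul_sq hb2).const_mul _
  refine hint.mono' ?_ ?_
  · exact ((continuous_pow q).mul
      ((continuous_const.mul (continuous_pow 2)).rexp)).aestronglyMeasurable
  · filter_upwards with x
    have hx2 : (0:ℝ) ≤ x ^ 2 := sq_nonneg x
    have key : (x ^ 2) ^ q ≤ (2 / b) ^ q * q ! * Real.exp ((b/2) * x ^ 2) := by
      have h0 : ((b/2) * x ^ 2) ^ q ≤ q ! * Real.exp ((b/2) * x ^ 2) :=
        aux_pow_le_exp q (by positivity)
      have h2 : (x ^ 2) ^ q = (2 / b) ^ q * ((b/2) * x ^ 2) ^ q := by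
        rw [← mul_pow]
        congr 1
        field_simp
      rw [h2, mul_assoc]
      exact mul_le_mul_of_nonneg_left h0 (by positivity)
    have habs : |x| ^ q ≤ (x ^ 2) ^ q + 1 := by
      rcases le_total (|x|) 1 with h | h
      · have h3 : |x| ^ q ≤ 1 := pow_le_one₀ (abs_nonneg x) h
        have := pow_nonneg hx2 q
        linarith
      · have h3 : |x| ^ q ≤ (|x| ^ 2) ^ q := by
          rw [← pow_mul]
          exact pow_le_pow_right₀ h (by omega)
        rw [sq_abs] at h3
        linarith
    have hexp : Real.exp (-b * x ^ 2) ≤ Real.exp (-(b/2) * x ^ 2) := by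
      apply Real.exp_le_exp.mpr
      nlinarith
    have hexp0 : (0:ℝ) < Real.exp (-b * x ^ 2) := Real.exp_pos _
    have hq0 : (0:ℝ) ≤ (2 / b) ^ q * q ! := by positivity
    calc ‖x ^ q * Real.exp (-b * x ^ 2)‖ = |x| ^ q * Real.exp (-b * x ^ 2) := by
          rw [norm_mul, Real.norm_eq_abs, Real.norm_eq_abs, abs_pow,
            abs_of_pos hexp0]
      _ ≤ ((x ^ 2) ^ q + 1) * Real.exp (-b * x ^ 2) := by
          exact mul_le_mul_of_nonneg_right habs hexp0.le
      _ ≤ ((2 / b) ^ q * q ! * Real.exp ((b/2) * x ^ 2) + 1) * Real.exp (-b * x ^ 2) := by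
          apply mul_le_mul_of_nonneg_right _ hexp0.le
          linarith
      _ = (2 / b) ^ q * q ! * Real.exp ((b/2) * x ^ 2 + -b * x ^ 2) + Real.exp (-b * x ^ 2) := by
          rw [Real.exp_add]; ring
      _ ≤ (2 / b) ^ q * q ! * Real.exp (-(b/2) * x ^ 2) + Real.exp (-(b/2) * x ^ 2) := by
          have : (b/2) * x ^ 2 + -b * x ^ 2 = -(b/2) * x ^ 2 := by ring
          rw [this]
          linarith
      _ = ((2 / b) ^ q * q ! + 1) * Real.exp (-(b/2) * x ^ 2) := by ring




noncomputable def gaussJ (q : ℕ) : ℝ := ∫ x : ℝ, x ^ q * Real.exp (-(1/2 : ℝ) * x ^ 2)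

lemma gaussJ_odd (q : ℕ) (hq : Odd q) : gaussJ q = 0 := by
  have hneg : gaussJ q = ∫ x : ℝ, (-x) ^ q * Real.exp (-(1/2 : ℝ) * (-x) ^ 2) := by
    unfold gaussJ
    exact ((Measure.measurePreserving_neg (volume : Measure ℝ)).integral_comp
      (Homeomorph.neg ℝ).measurableEmbedding _).symm
  have h2 : ∫ x : ℝ, (-x) ^ q * Real.exp (-(1/2 : ℝ) * (-x) ^ 2)
      = - gaussJ q := by
    unfold gaussJ
    rw [← integral_neg]
    congr 1
    funext x
    rw [hq.neg_pow]
    ring_nf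
  have h3 := hneg.trans h2
  linarith

lemma gaussJ_zero : gaussJ 0 = Real.sqrt (2 * π) := by
  unfold gaussJ
  simp only [pow_zero, one_mul]
  have := integral_gaussian (1/2 : ℝ)
  rw [show ((π : ℝ) / (1/2)) = 2 * π by ring] at this
  simpa using this

lemma gaussJ_rec (q : ℕ) : gaussJ (q + 2) = (q + 1) * gaussJ q := by
  have hder : ∀ x : ℝ, HasDerivAt (fun x : ℝ => x ^ (q+1) * Real.exp (-(1/2 : ℝ) * x ^ 2))
      ((q+1) * x ^ q * Real.exp (-(1/2 : ℝ) * x ^ 2)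
        - x ^ (q+2) * Real.exp (-(1/2 : ℝ) * x ^ 2)) x := by
    intro x
    have h1 : HasDerivAt (fun x : ℝ => x ^ (q+1)) ((q+1) * x ^ q) x := by
      simpa using hasDerivAt_pow (q+1) x
    have h2 : HasDerivAt (fun x : ℝ => Real.exp (-(1/2 : ℝ) * x ^ 2))
        (Real.exp (-(1/2 : ℝ) * x ^ 2) * (-x)) x := by
      have := ((hasDerivAt_pow 2 x).const_mul (-(1/2 : ℝ))).exp
      convert this using 1
      push_cast
      ring
    exact (h1.fun_mul h2).congr_deriv (by ring)
  have hint1 : Integrable (fun x : ℝ => (q+1 : ℝ) * x ^ q * Real.exp (-(1/2 : ℝ) * x ^ 2)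
      - x ^ (q+2) * Real.exp (-(1/2 : ℝ) * x ^ 2)) := by
    apply Integrable.sub
    · simpa [mul_assoc] using (integrable_pow_mul_gauss one_half_pos q).const_mul (q+1 : ℝ)
    · exact integrable_pow_mul_gauss one_half_pos (q+2)
  have hint2 : Integrable (fun x : ℝ => x ^ (q+1) * Real.exp (-(1/2 : ℝ) * x ^ 2)) :=
    integrable_pow_mul_gauss one_half_pos (q+1)
  have h0 := integral_eq_zero_of_hasDerivAt_of_integrable hder hint1 hint2
  rw [integral_sub (by simpa [mul_assoc] using (integrable_pow_mul_gauss one_half_pos q).const_mul (q+1 : ℝ))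
    (integrable_pow_mul_gauss one_half_pos (q+2))] at h0
  have h3 : ∫ x : ℝ, (q+1 : ℝ) * x ^ q * Real.exp (-(1/2 : ℝ) * x ^ 2)
      = (q+1 : ℝ) * ∫ x : ℝ, x ^ q * Real.exp (-(1/2 : ℝ) * x ^ 2) := by
    rw [← integral_const_mul]
    congr 1; funext x; ring
  rw [h3] at h0
  unfold gaussJ
  push_cast
  linarith






lemma pdf01 (x : ℝ) : gaussianPDFReal 0 1 x
    = (Real.sqrt (2 * π))⁻¹ * Real.exp (-(1/2 : ℝ) * x ^ 2) := by
  unfold gaussianPDFReal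
  simp only [NNReal.coe_one, mul_one, sub_zero]
  congr 2
  ring

lemma gaussianReal01 : gaussianReal 0 1
    = (volume : Measure ℝ).withDensity (fun x => ((gaussianPDFReal 0 1 x).toNNReal : ℝ≥0∞)) := by
  rw [gaussianReal_of_var_ne_zero 0 one_ne_zero]
  rfl

lemma integral_gaussianReal01 (f : ℝ → ℝ) :
    ∫ x, f x ∂(gaussianReal 0 1) = ∫ x, gaussianPDFReal 0 1 x * f x := by
  rw [gaussianReal01, integral_withDensity_eq_integral_smul
    ((measurable_gaussianPDFReal 0 1).real_toNNReal) f]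
  congr 1
  funext x
  rw [NNReal.smul_def, Real.coe_toNNReal _ (gaussianPDFReal_nonneg 0 1 x), smul_eq_mul]

lemma integrable_pow_gaussianReal (q : ℕ) :
    Integrable (fun x : ℝ => x ^ q) (gaussianReal 0 1) := by
  rw [gaussianReal01, integrable_withDensity_iff_integrable_smul
    ((measurable_gaussianPDFReal 0 1).real_toNNReal)]
  have : Integrable (fun x : ℝ => (Real.sqrt (2 * π))⁻¹ * (x ^ q * Real.exp (-(1/2 : ℝ) * x ^ 2))) :=
    (integrable_pow_mul_gauss one_half_pos q).const_mul _
  apply this.congr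
  filter_upwards with x
  rw [NNReal.smul_def, Real.coe_toNNReal _ (gaussianPDFReal_nonneg 0 1 x), smul_eq_mul, pdf01]
  ring

noncomputable def gmom (q : ℕ) : ℝ := ∫ x : ℝ, x ^ q ∂(gaussianReal 0 1)

lemma gmom_eq (q : ℕ) : gmom q = (Real.sqrt (2 * π))⁻¹ * gaussJ q := by
  unfold gmom gaussJ
  rw [integral_gaussianReal01, ← integral_const_mul]
  congr 1
  funext x
  rw [pdf01]
  ring

lemma sqrt_two_pi_pos : (0:ℝ) < Real.sqrt (2 * π) :=
  Real.sqrt_pos.mpr (by positivity)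

lemma gmom_zero : gmom 0 = 1 := by
  rw [gmom_eq, gaussJ_zero, inv_mul_cancel₀ sqrt_two_pi_pos.ne']

lemma gmom_one : gmom 1 = 0 := by
  rw [gmom_eq, gaussJ_odd 1 odd_one, mul_zero]

lemma gaussJ_two : gaussJ 2 = Real.sqrt (2 * π) := by
  have := gaussJ_rec 0
  norm_num at this
  rw [this, gaussJ_zero]

lemma gmom_two : gmom 2 = 1 := by
  rw [gmom_eq, gaussJ_two, inv_mul_cancel₀ sqrt_two_pi_pos.ne']

lemma gmom_four : gmom 4 = 3 := by
  have h2 := gaussJ_rec 2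
  norm_num at h2
  rw [gmom_eq, h2, gaussJ_two]
  rw [show (Real.sqrt (2*π))⁻¹ * (3 * Real.sqrt (2*π))
    = (Real.sqrt (2*π))⁻¹ * Real.sqrt (2*π) * 3 by ring,
    inv_mul_cancel₀ sqrt_two_pi_pos.ne', one_mul]



lemma integral_prod_of_indep {ι Ω : Type} [Fintype ι] [DecidableEq ι]
    [MeasureSpace Ω] [IsProbabilityMeasure (ℙ : Measure Ω)]
    (Y : ι → Ω → ℝ) (hmeas : ∀ i, Measurable (Y i))
    (hind : iIndepFun Y ℙ)
    (hint : ∀ i, Integrable (Y i) ℙ) (s : Finset ι) :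
    Integrable (fun x => ∏ i ∈ s, Y i x) ℙ ∧
      (∫ x, ∏ i ∈ s, Y i x ∂ℙ) = ∏ i ∈ s, ∫ x, Y i x ∂ℙ := by
  classical
  induction s using Finset.induction_on with
  | empty => simp
  | insert a s ha ih =>
    have hprod : (fun x => ∏ i ∈ insert a s, Y i x)
        = fun x => Y a x * ∏ i ∈ s, Y i x := by
      funext x
      exact Finset.prod_insert ha
    have hIF : IndepFun (Y a) (fun x => ∏ i ∈ s, Y i x) ℙ := by
      have := (hind.indepFun_finset_prod_of_notMem hmeas ha).symm
      have heq : (∏ j ∈ s, Y j) = fun x => ∏ i ∈ s, Y i x := by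
        funext x
        simp [Finset.prod_apply]
      rwa [heq] at this
    constructor
    · rw [hprod]
      exact hIF.integrable_mul (hint a) ih.1
    · rw [hprod, Finset.prod_insert ha, ← ih.2]
      exact hIF.integral_fun_mul_eq_mul_integral (hint a).1 ih.1.1



section cycle
variable {p : ℕ} [NeZero p] {α : Type*}
open Fin.NatCast Fin.CommRing

lemma fin_const_of_step (f : Fin p → α) (hstep : ∀ h, f (h + 1) = f h) (h : Fin p) :
    f h = f 0 := by
  have key : ∀ m : ℕ, f (m : Fin p) = f 0 := by
    intro m
    induction m with
    | zero => norm_num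
    | succ m ih =>
      have h1 : ((m + 1 : ℕ) : Fin p) = (m : Fin p) + 1 := by push_cast; ring
      rw [h1, hstep]
      exact ih
  have := key h.val
  rwa [Fin.cast_val_eq_self] at this

lemma exists_second_jump {n : ℕ} (τ : Fin p → Fin n) (h₀ : Fin p)
    (hj : τ h₀ ≠ τ (h₀ + 1)) : ∃ h₁, h₁ ≠ h₀ ∧ τ h₁ ≠ τ (h₁ + 1) := by
  by_contra hc
  push_neg at hc
  rcases eq_or_lt_of_le (Nat.one_le_iff_ne_zero.mpr (NeZero.ne p)) with hp1 | hp2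
  · -- p = 1 : Fin p is a subsingleton
    apply hj
    congr 1
    have : Subsingleton (Fin p) := by rw [← hp1]; infer_instance
    exact Subsingleton.elim _ _
  · -- p ≥ 2
    have key : ∀ m : ℕ, m + 1 < p → τ (h₀ + 1 + (m : Fin p)) = τ (h₀ + 1) := by
      intro m
      induction m with
      | zero => intro _; norm_num
      | succ m ih =>
        intro hm
        have h1 : ((m + 1 : ℕ) : Fin p) = (m : Fin p) + 1 := by push_cast; ring
        rw [h1, ← add_assoc]
        have hne : h₀ + 1 + (m : Fin p) ≠ h₀ := by
          intro hEq
          have h2 : ((1 + m : ℕ) : Fin p) = 0 := by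
            have h3 : h₀ + ((1 + m : ℕ) : Fin p) = h₀ + 0 := by
              push_cast
              rw [add_zero, ← add_assoc]
              exact hEq
            exact add_left_cancel h3
          rw [Fin.natCast_eq_zero] at h2
          have := Nat.le_of_dvd (by omega) h2
          omega
        rw [← hc _ hne]
        exact ih (by omega)
    have hfin : h₀ + 1 + ((p - 2 : ℕ) : Fin p) = h₀ - 1 := by
      have h2 : ((p - 2 : ℕ) : Fin p) = 0 - 2 := by
        have : ((p - 2 : ℕ) : Fin p) = ((p : ℕ) : Fin p) - ((2 : ℕ) : Fin p) := by
          rw [Nat.cast_sub (by omega)]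
        rw [this, Fin.natCast_self]
        norm_num
      rw [h2]
      ring
    have hlast : τ (h₀ - 1) = τ (h₀ + 1) := by
      rw [← hfin]
      exact key (p - 2) (by omega)
    have hstep : τ (h₀ - 1) = τ h₀ := by
      have hne : h₀ - 1 ≠ h₀ := by
        intro hEq
        have h3 : (1 : Fin p) = 0 := by
          have := sub_eq_iff_eq_add.mp hEq
          have h4 : h₀ + 0 = h₀ + 1 := by rw [add_zero]; exact this
          exact (add_left_cancel h4).symm
        have h5 : ((1:ℕ) : Fin p) = 0 := by exact_mod_cast h3
        rw [Fin.natCast_eq_zero] at h5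
        have := Nat.le_of_dvd (by omega) h5
        omega
      have := hc _ hne
      rwa [sub_add_cancel] at this
    exact hj (hstep.symm.trans hlast)
end cycle

set_option linter.unusedSectionVars false
section cnt
variable {p n k : ℕ} [NeZero p]

def cnt (v : Fin p → Fin n) (c : Fin p → Fin k) (rc : Fin n × Fin k) : ℕ :=
  (Finset.univ.filter fun h => (v h, c h) = rc).card

def occ (i j : Fin p → Fin k) (τ ρ : Fin p → Fin n) (rc : Fin n × Fin k) : ℕ :=
  cnt τ i rc + cnt τ (fun h => i (h + 1)) rc + cnt ρ j rc + cnt ρ (fun h => j (h + 1)) rc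

lemma occ_comm (i j : Fin p → Fin k) (τ ρ : Fin p → Fin n) (rc : Fin n × Fin k) :
    occ i j τ ρ rc = occ j i ρ τ rc := by
  unfold occ; omega

lemma cnt_eq_zero (v : Fin p → Fin n) (c : Fin p → Fin k) (rc : Fin n × Fin k)
    (hz : ∀ h, (v h, c h) ≠ rc) : cnt v c rc = 0 := by
  unfold cnt
  rw [Finset.filter_eq_empty_iff.mpr (fun h _ => hz h), Finset.card_empty]

lemma cnt_eq_one (v : Fin p → Fin n) (c : Fin p → Fin k) (rc : Fin n × Fin k)
    (a : Fin p) (ha : (v a, c a) = rc) (huniq : ∀ h, (v h, c h) = rc → h = a) :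
    cnt v c rc = 1 := by
  unfold cnt
  rw [show (Finset.univ.filter fun h => (v h, c h) = rc) = {a} from ?_, Finset.card_singleton]
  ext h
  simp only [Finset.mem_filter, Finset.mem_univ, true_and, Finset.mem_singleton]
  exact ⟨huniq h, fun hh => hh ▸ ha⟩

lemma cnt_range_zero (v : Fin p → Fin n) (c : Fin p → Fin k) (r : Fin n) (c' : Fin k)
    (hc : c' ∉ Set.range c) : cnt v c (r, c') = 0 :=
  cnt_eq_zero _ _ _ (fun h hh => hc ⟨h, (Prod.mk.injEq _ _ _ _ ▸ hh).2⟩)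
end cnt

section prods
set_option linter.unusedSectionVars false
variable {p n k : ℕ} [NeZero p]

lemma prod_M_zero (M : ℕ → ℝ) (hM1 : M 1 = 0)
    (i j : Fin p → Fin k) (hiinj : Function.Injective i) (c₀ : Fin k)
    (hinter : Set.range i ∩ Set.range j = {c₀})
    (τ ρ : Fin p → Fin n) (h₀ : Fin p) (hjump : τ h₀ ≠ τ (h₀ + 1)) :
    ∏ rc : Fin n × Fin k, M (occ i j τ ρ rc) = 0 := by
  obtain ⟨h, hjh, hcne⟩ : ∃ h, τ h ≠ τ (h + 1) ∧ i (h + 1) ≠ c₀ := by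
    by_cases hc : i (h₀ + 1) = c₀
    · obtain ⟨h₁, hne, hj1⟩ := exists_second_jump τ h₀ hjump
      refine ⟨h₁, hj1, fun hEq => hne ?_⟩
      have h2 : h₁ + 1 = h₀ + 1 := hiinj (hEq.trans hc.symm)
      exact add_right_cancel h2
    · exact ⟨h₀, hjump, hc⟩
  set c := i (h + 1) with hc_def
  have hcj : c ∉ Set.range j := by
    intro hcj
    apply hcne
    have : c ∈ Set.range i ∩ Set.range j := ⟨⟨h + 1, rfl⟩, hcj⟩
    rw [hinter] at this
    simpa using this
  apply Finset.prod_eq_zero (Finset.mem_univ (τ h, c))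
  suffices hocc : occ i j τ ρ (τ h, c) = 1 by rw [hocc, hM1]
  have h1 : cnt τ i (τ h, c) = 0 := by
    apply cnt_eq_zero
    intro h' hh
    rw [Prod.mk.injEq] at hh
    have h2 : h' = h + 1 := hiinj hh.2
    exact hjh (hh.1 ▸ h2 ▸ rfl : τ (h+1) = τ h).symm
  have h2 : cnt τ (fun h' => i (h' + 1)) (τ h, c) = 1 := by
    apply cnt_eq_one _ _ _ h (by simp [hc_def])
    intro h' hh
    rw [Prod.mk.injEq] at hh
    exact add_right_cancel (hiinj hh.2)
  have h3 : cnt ρ j (τ h, c) = 0 := cnt_range_zero _ _ _ _ hcj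
  have h4 : cnt ρ (fun h' => j (h' + 1)) (τ h, c) = 0 := by
    apply cnt_range_zero
    intro ⟨h', hh'⟩
    exact hcj ⟨h' + 1, hh'⟩
  unfold occ
  omega

lemma prod_M_const (M : ℕ → ℝ) (hM0 : M 0 = 1) (hM2 : M 2 = 1) (hM4 : M 4 = 3)
    (i j : Fin p → Fin k) (hiinj : Function.Injective i) (hjinj : Function.Injective j)
    (c₀ : Fin k) (hinter : Set.range i ∩ Set.range j = {c₀}) (u v : Fin n) :
    ∏ rc : Fin n × Fin k, M (occ i j (fun _ => u) (fun _ => v) rc)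
      = if u = v then 3 else 1 := by
  classical
  have hc₀i : c₀ ∈ Set.range i := by
    have : c₀ ∈ Set.range i ∩ Set.range j := by rw [hinter]; rfl
    exact this.1
  have hc₀j : c₀ ∈ Set.range j := by
    have : c₀ ∈ Set.range i ∩ Set.range j := by rw [hinter]; rfl
    exact this.2
  -- helper: value of cnt for constant assignments
  have hcnt : ∀ (w : Fin n) (f : Fin p → Fin k), Function.Injective f →
      ∀ (r : Fin n) (c : Fin k),
      cnt (fun _ => w) f (r, c) = if w = r ∧ c ∈ Set.range f then 1 else 0 := by
    intro w f hfinj r c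
    by_cases hw : w = r
    · by_cases hcr : c ∈ Set.range f
      · obtain ⟨a, ha⟩ := hcr
        rw [if_pos ⟨hw, ⟨a, ha⟩⟩]
        apply cnt_eq_one _ _ _ a (by rw [hw, ha])
        intro h' hh
        rw [Prod.mk.injEq] at hh
        exact hfinj (hh.2.trans ha.symm)
      · rw [if_neg (by tauto)]
        exact cnt_range_zero _ _ _ _ hcr
    · rw [if_neg (by tauto)]
      apply cnt_eq_zero
      intro h' hh
      rw [Prod.mk.injEq] at hh
      exact hw hh.1
  have hsucc_inj : ∀ (f : Fin p → Fin k), Function.Injective f →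
      Function.Injective (fun h => f (h + 1)) := by
    intro f hfinj a b hab
    exact add_right_cancel (hfinj hab)
  have hsucc_range : ∀ (f : Fin p → Fin k), Set.range (fun h => f (h + 1)) = Set.range f := by
    intro f
    ext c
    constructor
    · rintro ⟨a, ha⟩; exact ⟨a + 1, ha⟩
    · rintro ⟨a, ha⟩; exact ⟨a - 1, by simp [sub_add_cancel, ha]⟩
  have hocc : ∀ (r : Fin n) (c : Fin k), occ i j (fun _ => u) (fun _ => v) (r, c)
      = (if u = r ∧ c ∈ Set.range i then 2 else 0)
        + (if v = r ∧ c ∈ Set.range j then 2 else 0) := by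
    intro r c
    unfold occ
    rw [hcnt u i hiinj, hcnt v j hjinj, hcnt u _ (hsucc_inj i hiinj),
      hcnt v _ (hsucc_inj j hjinj)]
    simp only [hsucc_range i, hsucc_range j]
    split_ifs <;> omega
  by_cases huv : u = v
  · subst huv
    rw [if_pos rfl]
    rw [Finset.prod_eq_single (u, c₀)]
    · rw [hocc, if_pos ⟨rfl, hc₀i⟩, if_pos ⟨rfl, hc₀j⟩]
      norm_num [hM4]
    · rintro ⟨r, c⟩ _ hne
      rw [hocc]
      by_cases hr : u = r
      · subst hr
        have hcc : c ≠ c₀ := fun hcc => hne (by rw [hcc])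
        have hnot : ¬(c ∈ Set.range i ∧ c ∈ Set.range j) := by
          intro ⟨h1, h2⟩
          apply hcc
          have : c ∈ Set.range i ∩ Set.range j := ⟨h1, h2⟩
          rw [hinter] at this
          simpa using this
        by_cases h1 : c ∈ Set.range i
        · have h2 : c ∉ Set.range j := fun h2 => hnot ⟨h1, h2⟩
          rw [if_pos ⟨rfl, h1⟩, if_neg (by tauto)]
          norm_num [hM2]
        · by_cases h2 : c ∈ Set.range j
          · rw [if_neg (by tauto), if_pos ⟨rfl, h2⟩]
            norm_num [hM2]
          · rw [if_neg (by tauto), if_neg (by tauto)]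
            norm_num [hM0]
      · rw [if_neg (by tauto), if_neg (by tauto)]
        norm_num [hM0]
    · intro h; exact absurd (Finset.mem_univ _) h
  · rw [if_neg huv]
    apply Finset.prod_eq_one
    rintro ⟨r, c⟩ _
    rw [hocc]
    by_cases h1 : u = r ∧ c ∈ Set.range i
    · have h2 : ¬(v = r ∧ c ∈ Set.range j) := by
        intro ⟨hv, _⟩
        exact huv (h1.1.trans hv.symm)
      rw [if_pos h1, if_neg h2]
      norm_num [hM2]
    · by_cases h2 : v = r ∧ c ∈ Set.range j
      · rw [if_neg h1, if_pos h2]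
        norm_num [hM2]
      · rw [if_neg h1, if_neg h2]
        norm_num [hM0]
end prods


section expandsec
variable {p n k : ℕ} [NeZero p]

lemma prod_omega_eq {Ω : Type} (ω : Fin n → Fin k → Ω → ℝ)
    (v : Fin p → Fin n) (c : Fin p → Fin k) (x : Ω) :
    ∏ h, ω (v h) (c h) x = ∏ rc : Fin n × Fin k, ω rc.1 rc.2 x ^ cnt v c rc := by
  classical
  rw [← Finset.prod_fiberwise' Finset.univ (fun h => (v h, c h)) (fun rc => ω rc.1 rc.2 x)]
  apply Finset.prod_congr rfl
  intro rc _
  rw [Finset.prod_const, cnt]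

lemma fTerm_expand {Ω : Type} (σ : Fin n → ℝ) (ω : Fin n → Fin k → Ω → ℝ)
    (i j : Fin p → Fin k) (x : Ω) :
    fTerm σ ω i j x = ∑ τ : Fin p → Fin n, ∑ ρ : Fin p → Fin n,
      ((∏ h, σ (τ h) ^ 2) * (∏ h, σ (ρ h) ^ 2))
        * ∏ rc : Fin n × Fin k, ω rc.1 rc.2 x ^ occ i j τ ρ rc := by
  classical
  unfold fTerm
  rw [Finset.prod_mul_distrib]
  rw [Fintype.prod_sum (f := fun h (t : Fin n) => σ t ^ 2 * ω t (i h) x * ω t (i (h + 1)) x)]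
  rw [Fintype.prod_sum (f := fun h (s : Fin n) => σ s ^ 2 * ω s (j h) x * ω s (j (h + 1)) x)]
  rw [Finset.sum_mul_sum]
  apply Finset.sum_congr rfl
  intro τ _
  apply Finset.sum_congr rfl
  intro ρ _
  have hsplit : ∀ (v : Fin p → Fin n) (c : Fin p → Fin k),
      (∏ h, σ (v h) ^ 2 * ω (v h) (c h) x * ω (v h) (c (h + 1)) x)
        = (∏ h, σ (v h) ^ 2) * (∏ h, ω (v h) (c h) x) * (∏ h, ω (v h) (c (h + 1)) x) := by
    intro v c
    rw [← Finset.prod_mul_distrib, ← Finset.prod_mul_distrib]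
  rw [hsplit τ i, hsplit ρ j]
  rw [prod_omega_eq ω τ i x, prod_omega_eq ω τ (fun h => i (h + 1)) x,
    prod_omega_eq ω ρ j x, prod_omega_eq ω ρ (fun h => j (h + 1)) x]
  rw [show ∀ a b c d e f : ℝ, a * b * c * (d * e * f) = (a * d) * (b * c * (e * f)) from
    fun a b c d e f => by ring]
  congr 1
  rw [← Finset.prod_mul_distrib, ← Finset.prod_mul_distrib, ← Finset.prod_mul_distrib]
  apply Finset.prod_congr rfl
  intro rc _
  rw [← pow_add, ← pow_add, ← pow_add, occ]
  congr 1
  omega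

end expandsec

end Aux

section Main
open Finset

set_option maxHeartbeats 1000000 in
/-- If the index sets of the two strictly increasing `p`-tuples share
exactly one common element, then
`E[f_{i_1,…,j_p}] = (Σ_t σ_t^{2p})² + 2 Σ_t σ_t^{4p} = ‖A‖_{2p}^{4p} + 2‖A‖_{4p}^{4p}`. -/
theorem stmt10 {n k p : ℕ} [NeZero p] (σ : Fin n → ℝ) (hσ : ∀ t, 0 ≤ σ t)
    {Ω : Type} [MeasureSpace Ω] [IsProbabilityMeasure (ℙ : Measure Ω)]
    (ω : Fin n → Fin k → Ω → ℝ)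
    (hmeas : ∀ t i, Measurable (ω t i))
    (hgauss : ∀ t i, Measure.map (ω t i) ℙ = gaussianReal 0 1)
    (hindep : iIndepFun
      (fun ti : Fin n × Fin k => ω ti.1 ti.2) ℙ)
    (i j : Fin p → Fin k) (hi : StrictMono i) (hj : StrictMono j)
    (hrep : (Set.range i ∩ Set.range j).ncard = 1) :
    ∫ x, fTerm σ ω i j x ∂ℙ
      = (∑ t, σ t ^ (2 * p)) ^ 2 + 2 * ∑ t, σ t ^ (4 * p) := by
  classical
  obtain ⟨c₀, hc₀⟩ := Set.ncard_eq_one.mp hrep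
  have hiinj := hi.injective
  have hjinj := hj.injective
  -- integral of each monomial
  have hW : ∀ τ ρ : Fin p → Fin n,
      Integrable (fun x => ∏ rc : Fin n × Fin k, ω rc.1 rc.2 x ^ occ i j τ ρ rc) ℙ ∧
      (∫ x, ∏ rc : Fin n × Fin k, ω rc.1 rc.2 x ^ occ i j τ ρ rc ∂ℙ)
        = ∏ rc : Fin n × Fin k, gmom (occ i j τ ρ rc) := by
    intro τ ρ
    have hYmeas : ∀ rc : Fin n × Fin k,
        Measurable (fun x => ω rc.1 rc.2 x ^ occ i j τ ρ rc) :=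
      fun rc => (hmeas rc.1 rc.2).pow_const _
    have hYindep : iIndepFun
        (fun rc : Fin n × Fin k => fun x => ω rc.1 rc.2 x ^ occ i j τ ρ rc) ℙ := by
      have := hindep.comp (fun rc (y : ℝ) => y ^ occ i j τ ρ rc)
        (fun rc => measurable_id.pow_const _)
      exact this
    have hYint : ∀ rc : Fin n × Fin k,
        Integrable (fun x => ω rc.1 rc.2 x ^ occ i j τ ρ rc) ℙ := by
      intro rc
      have h1 : Integrable (fun y : ℝ => y ^ occ i j τ ρ rc) (gaussianReal 0 1) :=
        integrable_pow_gaussianReal _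
      rw [← hgauss rc.1 rc.2] at h1
      rw [integrable_map_measure (by fun_prop) (hmeas rc.1 rc.2).aemeasurable] at h1
      exact h1
    have hYval : ∀ rc : Fin n × Fin k,
        (∫ x, ω rc.1 rc.2 x ^ occ i j τ ρ rc ∂ℙ) = gmom (occ i j τ ρ rc) := by
      intro rc
      unfold gmom
      rw [← hgauss rc.1 rc.2, integral_map (hmeas rc.1 rc.2).aemeasurable (by fun_prop)]
    obtain ⟨hint, hval⟩ := integral_prod_of_indep _ hYmeas hYindep hYint Finset.univ
    exact ⟨hint, by rw [hval]; exact Finset.prod_congr rfl fun rc _ => hYval rc⟩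
  -- expand the integrand and integrate term by term
  have hre : (∫ x, fTerm σ ω i j x ∂ℙ)
      = ∑ τ : Fin p → Fin n, ∑ ρ : Fin p → Fin n,
          ((∏ h, σ (τ h) ^ 2) * (∏ h, σ (ρ h) ^ 2))
            * ∏ rc : Fin n × Fin k, gmom (occ i j τ ρ rc) := by
    simp_rw [fTerm_expand σ ω i j]
    rw [integral_finset_sum _ (fun τ _ => integrable_finset_sum _
      (fun ρ _ => ((hW τ ρ).1.const_mul _)))]
    apply Finset.sum_congr rfl; intro τ _
    rw [integral_finset_sum _ (fun ρ _ => ((hW τ ρ).1.const_mul _))]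
    apply Finset.sum_congr rfl; intro ρ _
    rw [integral_const_mul, (hW τ ρ).2]
  rw [hre]
  -- only constant assignments contribute
  set e : Fin n × Fin n → (Fin p → Fin n) × (Fin p → Fin n) :=
    fun uv => (fun _ => uv.1, fun _ => uv.2) with he_def
  have he_inj : Function.Injective e := by
    intro a b hab
    rw [Prod.mk.injEq] at hab
    exact Prod.ext (congrFun hab.1 0) (congrFun hab.2 0)
  have hzero : ∀ q : (Fin p → Fin n) × (Fin p → Fin n),
      q ∈ (Finset.univ : Finset ((Fin p → Fin n) × (Fin p → Fin n))) →
      q ∉ Finset.univ.image e →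
      ((∏ h, σ (q.1 h) ^ 2) * (∏ h, σ (q.2 h) ^ 2))
        * ∏ rc : Fin n × Fin k, gmom (occ i j q.1 q.2 rc) = 0 := by
    rintro ⟨τ, ρ⟩ _ hq
    by_cases hτ : ∀ h, τ (h + 1) = τ h
    · by_cases hρ : ∀ h, ρ (h + 1) = ρ h
      · exfalso
        apply hq
        rw [Finset.mem_image]
        refine ⟨(τ 0, ρ 0), Finset.mem_univ _, ?_⟩
        rw [he_def]
        refine (Prod.ext ?_ ?_).symm
        · funext h; exact fin_const_of_step τ hτ h
        · funext h; exact fin_const_of_step ρ hρ h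
      · push_neg at hρ
        obtain ⟨h₀, hh₀⟩ := hρ
        rw [show (∏ rc : Fin n × Fin k, gmom (occ i j τ ρ rc))
            = ∏ rc : Fin n × Fin k, gmom (occ j i ρ τ rc) from
          Finset.prod_congr rfl (fun rc _ => by rw [occ_comm])]
        rw [prod_M_zero gmom gmom_one j i hjinj c₀ (by rw [Set.inter_comm]; exact hc₀)
          ρ τ h₀ (Ne.symm hh₀), mul_zero]
    · push_neg at hτ
      obtain ⟨h₀, hh₀⟩ := hτ
      rw [prod_M_zero gmom gmom_one i j hiinj c₀ hc₀ τ ρ h₀ (Ne.symm hh₀), mul_zero]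
  rw [← Finset.sum_product', Finset.univ_product_univ]
  rw [← Finset.sum_subset (Finset.subset_univ (Finset.univ.image e)) hzero]
  rw [Finset.sum_image (fun a _ b _ hab => he_inj hab)]
  -- evaluate on constants
  have hconstprod : ∀ u : Fin n, (∏ _h : Fin p, σ u ^ 2) = σ u ^ (2 * p) := by
    intro u
    rw [Finset.prod_const, Finset.card_univ, Fintype.card_fin, ← pow_mul]
  have hval : ∀ uv : Fin n × Fin n,
      ((∏ h, σ ((e uv).1 h) ^ 2) * (∏ h, σ ((e uv).2 h) ^ 2))
        * ∏ rc : Fin n × Fin k, gmom (occ i j (e uv).1 (e uv).2 rc)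
      = σ uv.1 ^ (2 * p) * σ uv.2 ^ (2 * p)
          + (if uv.1 = uv.2 then σ uv.1 ^ (2 * p) * σ uv.2 ^ (2 * p) * 2 else 0) := by
    rintro ⟨u, v⟩
    rw [he_def]
    simp only
    rw [prod_M_const gmom gmom_zero gmom_two gmom_four i j hiinj hjinj c₀ hc₀ u v,
      hconstprod u, hconstprod v]
    split <;> ring
  rw [Finset.sum_congr rfl (fun uv _ => hval uv)]
  rw [Finset.sum_add_distrib]
  congr 1
  · rw [Fintype.sum_prod_type, sq,
      Finset.sum_mul_sum Finset.univ Finset.univ (fun t => σ t ^ (2*p)) (fun t => σ t ^ (2*p))]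
  · rw [Fintype.sum_prod_type]
    have hinner : ∀ u : Fin n,
        (∑ v : Fin n, if u = v then σ u ^ (2 * p) * σ v ^ (2 * p) * 2 else 0)
          = 2 * σ u ^ (4 * p) := by
      intro u
      rw [Finset.sum_ite_eq Finset.univ u (fun v => σ u ^ (2 * p) * σ v ^ (2 * p) * 2)]
      rw [if_pos (Finset.mem_univ u), ← pow_add]
      rw [show 2 * p + 2 * p = 4 * p by ring]
      ring
    rw [Finset.sum_congr rfl (fun u _ => hinner u), ← Finset.mul_sum]

end Main
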